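/- Counting roots in the upper half-plane via the Cauchy index over ℝ: if p is a monic complex polynomial with no roots on the real axis, then the number of roots of p in the open upper half-plane {z : Im z > 0}, counted with multiplicity, equals (deg(p) − Ind_{−∞}^{∞}(λt. Im(p(t))/Re(p(t)))) / 2, where the Cauchy index Ind_{−∞}^{∞} of the rational function (Im ∘ p)/(Re ∘ p) is the sum of its half-integer jumps over all of ℝ. -/

import Mathlib

open Complex Filter Topology Polynomial Set

open Classical in
noncomputable def jumpF (f : ℝ → ℝ) (F : Filter ℝ) : ℝ :=
  if Tendsto f F atTop then 1/2 else if Tendsto f F atBot then -1/2 else 0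

/-- band index -/
noncomputable def bandK (θ : ℝ → ℝ) (t : ℝ) : ℤ := ⌊θ t / Real.pi + 1/2⌋

lemma cos_ne_zero_band {x : ℝ} (h : Real.cos x ≠ 0) : x / Real.pi + 1/2 ∉ (Set.range (Int.cast : ℤ → ℝ)) := by
  rintro ⟨k, hk⟩
  apply h
  rw [Real.cos_eq_zero_iff]
  refine ⟨k - 1, ?_⟩
  have hπ := Real.pi_pos
  have : x = (k - 1/2 : ℝ) * Real.pi := by
    field_simp at hk ⊢; linarith
  rw [this]; push_cast; ring

/-- L1 : sign constancy -/
lemma sign_const_of_ne_zero {f : ℝ → ℝ} {a b : ℝ} (hab : a ≤ b) (hf : ContinuousOn f (Icc a b))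
    (h : ∀ t ∈ Icc a b, f t ≠ 0) : 0 < f a * f b := by
  rcases lt_or_gt_of_ne (h a (left_mem_Icc.2 hab)) with ha | ha
  · rcases lt_or_gt_of_ne (h b (right_mem_Icc.2 hab)) with hb | hb
    · exact mul_pos_of_neg_of_neg ha hb
    · exfalso
      obtain ⟨c, hc, hc0⟩ := intermediate_value_Icc hab hf (by constructor <;> [exact ha.le; exact hb.le] : (0:ℝ) ∈ Icc (f a) (f b))
      exact h c hc hc0
  · rcases lt_or_gt_of_ne (h b (right_mem_Icc.2 hab)) with hb | hb
    · exfalso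
      obtain ⟨c, hc, hc0⟩ := intermediate_value_Icc' hab hf (by constructor <;> [exact hb.le; exact ha.le] : (0:ℝ) ∈ Icc (f b) (f a))
      exact h c hc hc0
    · exact mul_pos ha hb

/-- L2 : band constancy on cos-nonvanishing interval -/
lemma bandK_const {θ : ℝ → ℝ} (hθ : Continuous θ) {a b : ℝ} (hab : a ≤ b)
    (h : ∀ t ∈ Icc a b, Real.cos (θ t) ≠ 0) : bandK θ a = bandK θ b := by
  have hπ := Real.pi_pos
  set g : ℝ → ℝ := fun t => θ t / Real.pi + 1/2 with hg
  have hgc : ContinuousOn g (Icc a b) := ((hθ.div_const _).add continuous_const).continuousOn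
  have hne : ∀ t ∈ Icc a b, g t ∉ (Set.range (Int.cast : ℤ → ℝ)) := fun t ht => cos_ne_zero_band (h t ht)
  by_contra hne'
  rcases lt_or_gt_of_ne hne' with hlt | hlt
  · have h1 : g a ≤ ((⌊g a⌋ + 1 : ℤ) : ℝ) := by push_cast; exact (Int.lt_floor_add_one (g a)).le
    have h2 : ((⌊g a⌋ + 1 : ℤ) : ℝ) ≤ g b := by
      have : (⌊g a⌋ + 1 : ℤ) ≤ ⌊g b⌋ := hlt
      calc ((⌊g a⌋ + 1 : ℤ) : ℝ) ≤ (⌊g b⌋ : ℝ) := by exact_mod_cast this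
        _ ≤ g b := Int.floor_le _
    obtain ⟨c, hc, hc0⟩ := intermediate_value_Icc hab hgc ⟨h1, h2⟩
    exact hne c hc ⟨_, hc0.symm⟩
  · have h1 : g b ≤ ((⌊g b⌋ + 1 : ℤ) : ℝ) := by push_cast; exact (Int.lt_floor_add_one (g b)).le
    have h2 : ((⌊g b⌋ + 1 : ℤ) : ℝ) ≤ g a := by
      have : (⌊g b⌋ + 1 : ℤ) ≤ ⌊g a⌋ := hlt
      calc ((⌊g b⌋ + 1 : ℤ) : ℝ) ≤ (⌊g a⌋ : ℝ) := by exact_mod_cast this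
        _ ≤ g a := Int.floor_le _
    obtain ⟨c, hc, hc0⟩ := intermediate_value_Icc' hab hgc ⟨h1, h2⟩
    exact hne c hc ⟨_, hc0.symm⟩

/-- L3 : eventual band value from a limit -/
lemma bandK_eventually {θ : ℝ → ℝ} {F : Filter ℝ} {L : ℝ} (hθ : Tendsto θ F (𝓝 L))
    (hL : Real.cos L ≠ 0) : ∀ᶠ t in F, bandK θ t = ⌊L / Real.pi + 1/2⌋ := by
  have hπ := Real.pi_pos
  have hni := cos_ne_zero_band hL
  set m := ⌊L / Real.pi + 1/2⌋ with hm
  have h1 : (m : ℝ) < L / Real.pi + 1/2 := by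
    rcases lt_or_eq_of_le (Int.floor_le (L / Real.pi + 1/2)) with h | h
    · exact h
    · exact absurd ⟨m, h⟩ hni
  have h2 : L / Real.pi + 1/2 < (m : ℝ) + 1 := Int.lt_floor_add_one _
  have hev : ∀ᶠ t in F, θ t / Real.pi + 1/2 ∈ Ioo (m : ℝ) ((m : ℝ) + 1) := by
    have : Tendsto (fun t => θ t / Real.pi + 1/2) F (𝓝 (L / Real.pi + 1/2)) :=
      (hθ.div_const _).add_const _
    exact this (Ioo_mem_nhds h1 h2)
  filter_upwards [hev] with t ht
  exact Int.floor_eq_iff.2 ⟨ht.1.le, by exact_mod_cast ht.2⟩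

lemma jumpF_atTop {f : ℝ → ℝ} {F : Filter ℝ} (h : Tendsto f F atTop) : jumpF f F = 1/2 := by
  rw [jumpF, if_pos h]

lemma jumpF_atBot {f : ℝ → ℝ} {F : Filter ℝ} [F.NeBot] (h : Tendsto f F atBot) :
    jumpF f F = -1/2 := by
  rw [jumpF, if_neg (h.not_tendsto disjoint_atBot_atTop), if_pos h]

lemma jumpF_nhds {f : ℝ → ℝ} {F : Filter ℝ} {L : ℝ} [F.NeBot] (h : Tendsto f F (𝓝 L)) :
    jumpF f F = 0 := by
  rw [jumpF, if_neg (h.not_tendsto (disjoint_nhds_atTop L)),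
    if_neg (h.not_tendsto (disjoint_nhds_atBot L))]

lemma tendsto_div_pp {f g : ℝ → ℝ} {F : Filter ℝ} {V : ℝ} (hV : 0 < V)
    (hg : Tendsto g F (𝓝 V)) (hf0 : Tendsto f F (𝓝 0)) (hfs : ∀ᶠ t in F, 0 < f t) :
    Tendsto (fun t => g t / f t) F atTop := by
  have h1 : Tendsto f F (𝓝[>] 0) := tendsto_nhdsWithin_iff.2 ⟨hf0, hfs⟩
  have h2 : Tendsto (fun t => (f t)⁻¹) F atTop := tendsto_inv_nhdsGT_zero.comp h1
  simpa [div_eq_mul_inv] using hg.pos_mul_atTop hV h2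

lemma tendsto_div_np {f g : ℝ → ℝ} {F : Filter ℝ} {V : ℝ} (hV : V < 0)
    (hg : Tendsto g F (𝓝 V)) (hf0 : Tendsto f F (𝓝 0)) (hfs : ∀ᶠ t in F, 0 < f t) :
    Tendsto (fun t => g t / f t) F atBot := by
  have h := tendsto_div_pp (neg_pos.2 hV) hg.neg hf0 hfs
  rw [← tendsto_neg_atTop_iff]
  simpa [neg_div] using h

lemma tendsto_div_pn {f g : ℝ → ℝ} {F : Filter ℝ} {V : ℝ} (hV : 0 < V)
    (hg : Tendsto g F (𝓝 V)) (hf0 : Tendsto f F (𝓝 0)) (hfs : ∀ᶠ t in F, f t < 0) :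
    Tendsto (fun t => g t / f t) F atBot := by
  have hf0' : Tendsto (fun t => -f t) F (𝓝 0) := by simpa using hf0.neg
  have h := tendsto_div_pp hV hg hf0' (by filter_upwards [hfs] with t ht; linarith)
  rw [← tendsto_neg_atTop_iff]
  simpa [div_neg] using h

lemma tendsto_div_nn {f g : ℝ → ℝ} {F : Filter ℝ} {V : ℝ} (hV : V < 0)
    (hg : Tendsto g F (𝓝 V)) (hf0 : Tendsto f F (𝓝 0)) (hfs : ∀ᶠ t in F, f t < 0) :
    Tendsto (fun t => g t / f t) F atTop := by
  have hf0' : Tendsto (fun t => -f t) F (𝓝 0) := by simpa using hf0.neg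
  have h := tendsto_div_pp (neg_pos.2 hV) hg.neg hf0'
    (by filter_upwards [hfs] with t ht; linarith)
  simpa [div_neg, neg_div] using h

set_option maxHeartbeats 1000000 in
/-- Lemma C : the jump at a zero of `u` equals the band drop. -/
lemma jump_eq_bandK {θ w u v : ℝ → ℝ} (hθ : Continuous θ) (hw : Continuous w)
    (hwpos : ∀ t, 0 < w t)
    (hu : ∀ t, u t = Real.cos (θ t) * w t) (hv : ∀ t, v t = Real.sin (θ t) * w t)
    {y x y' : ℝ} (hyx : y < x) (hxy' : x < y')
    (hnz : ∀ t ∈ Icc y y', t ≠ x → u t ≠ 0) (hx : u x = 0) :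
    jumpF (fun t => v t / u t) (𝓝[>] x) - jumpF (fun t => v t / u t) (𝓝[<] x)
      = (bandK θ y : ℝ) - (bandK θ y' : ℝ) := by
  have hπ := Real.pi_pos
  have hcu : Continuous u := by
    have h : u = fun t => Real.cos (θ t) * w t := funext hu
    rw [h]; exact (Real.continuous_cos.comp hθ).mul hw
  have hcv : Continuous v := by
    have h : v = fun t => Real.sin (θ t) * w t := funext hv
    rw [h]; exact (Real.continuous_sin.comp hθ).mul hw
  have hcosx : Real.cos (θ x) = 0 := by
    rcases mul_eq_zero.mp ((hu x) ▸ hx) with h | h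
    · exact h
    · exact absurd h (hwpos x).ne'
  set σ := Real.sin (θ x) with hσ
  have hσ1 : σ = 1 ∨ σ = -1 := by
    have h2 := Real.sin_sq_add_cos_sq (θ x)
    rw [hcosx] at h2
    exact mul_self_eq_one_iff.mp (by nlinarith)
  have hσsq : σ * σ = 1 := by rcases hσ1 with h | h <;> rw [h] <;> norm_num
  have hvx : v x = σ * w x := hv x
  have hcosof : ∀ s, Real.cos (θ s) = -σ * Real.sin (θ s - θ x) := by
    intro s
    have h : θ s = θ x + (θ s - θ x) := by ring
    rw [hσ, h, Real.cos_add, hcosx]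
    ring
  have huzero : ∀ s, u s = 0 ↔ Real.cos (θ s) = 0 := by
    intro s
    rw [hu s]
    constructor
    · intro h
      rcases mul_eq_zero.mp h with h | h
      · exact h
      · exact absurd h (hwpos s).ne'
    · intro h; rw [h, zero_mul]
  have hRs : ∀ t ∈ Ioc x y', 0 < u t * u y' := by
    intro t ht
    refine sign_const_of_ne_zero ht.2 hcu.continuousOn (fun s hs => ?_)
    exact hnz s ⟨by linarith [hs.1, ht.1], hs.2⟩ (by have : x < s := lt_of_lt_of_le ht.1 hs.1; exact this.ne')
  have hLs : ∀ t ∈ Ico y x, 0 < u y * u t := by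
    intro t ht
    refine sign_const_of_ne_zero ht.1 hcu.continuousOn (fun s hs => ?_)
    exact hnz s ⟨hs.1, by linarith [hs.2, ht.2]⟩ (by have : s < x := lt_of_le_of_lt hs.2 ht.2; exact this.ne)
  have huy' : u y' ≠ 0 := hnz y' ⟨by linarith, le_refl _⟩ (by intro h; exact absurd h.symm hxy'.ne)
  have huy : u y ≠ 0 := hnz y ⟨le_refl _, by linarith⟩ hyx.ne
  obtain ⟨k₀, hk₀⟩ := Real.cos_eq_zero_iff.mp hcosx
  have hθx : θ x = ((k₀ : ℝ) + 1/2) * Real.pi := by rw [hk₀]; push_cast; ring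
  -- band value from local data
  have hbandval : ∀ s, |θ s - θ x| < Real.pi/2 → u s ≠ 0 →
      bandK θ s = if 0 < σ * u s then k₀ else k₀ + 1 := by
    intro s hd hus
    have hcs : Real.cos (θ s) ≠ 0 := fun h => hus ((huzero s).mpr h)
    have hds : θ s - θ x ≠ 0 := by
      intro h
      apply hcs
      rw [hcosof s, h, Real.sin_zero, mul_zero]
    obtain ⟨hd1, hd2⟩ := abs_lt.mp hd
    have hσu : σ * u s = -Real.sin (θ s - θ x) * w s := by
      have h' : σ * u s = -(σ * σ) * Real.sin (θ s - θ x) * w s := by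
        rw [hu s, hcosof s]; ring
      rw [hσsq] at h'
      rw [h']; ring
    have e1 : θ s / Real.pi + 1/2 = (θ s + Real.pi/2) / Real.pi := by
      rw [eq_div_iff hπ.ne', add_mul, div_mul_cancel₀ _ hπ.ne']
      ring
    rcases lt_or_gt_of_ne hds with hdneg | hdpos
    · have hsd : Real.sin (θ s - θ x) < 0 :=
        Real.sin_neg_of_neg_of_neg_pi_lt hdneg (by linarith)
      have hpos : 0 < σ * u s := by rw [hσu]; nlinarith [hwpos s]
      rw [if_pos hpos, bandK, e1, Int.floor_eq_iff, le_div_iff₀ hπ, div_lt_iff₀ hπ]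
      refine ⟨by push_cast; nlinarith, by push_cast; nlinarith⟩
    · have hsd : 0 < Real.sin (θ s - θ x) :=
        Real.sin_pos_of_pos_of_lt_pi hdpos (by linarith)
      have hneg : ¬ (0 < σ * u s) := by rw [hσu]; nlinarith [hwpos s]
      rw [if_neg hneg, bandK, e1, Int.floor_eq_iff, le_div_iff₀ hπ, div_lt_iff₀ hπ]
      refine ⟨by push_cast; nlinarith, by push_cast; nlinarith⟩
  -- choose sample points on each side
  have hθcont : ∀ z : ℝ, Tendsto θ (𝓝[≠] z) (𝓝 (θ z)) := fun z =>
    (hθ.tendsto z).mono_left nhdsWithin_le_nhds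
  have hevR : ∀ᶠ t in 𝓝[>] x, |θ t - θ x| < Real.pi/2 ∧ t ∈ Ioc x y' := by
    have h1 : Tendsto θ (𝓝[>] x) (𝓝 (θ x)) := (hθ.tendsto x).mono_left nhdsWithin_le_nhds
    exact (h1.eventually (eventually_abs_sub_lt (θ x) (by linarith))).and
      (Filter.eventually_of_mem (Ioc_mem_nhdsGT_of_mem ⟨le_refl x, hxy'⟩) (fun t ht => ht))
  obtain ⟨t₀, hd₀, ht₀⟩ := hevR.exists
  have hut₀ : u t₀ ≠ 0 := hnz t₀ ⟨by linarith [ht₀.1], ht₀.2⟩ ht₀.1.ne'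
  have hbR : bandK θ t₀ = bandK θ y' := by
    refine bandK_const hθ ht₀.2 (fun s hs hc => ?_)
    exact hnz s ⟨by linarith [hs.1, ht₀.1], hs.2⟩
      (lt_of_lt_of_le ht₀.1 hs.1).ne' ((huzero s).mpr hc)
  have hsR : 0 < σ * u t₀ ↔ 0 < σ * u y' := by
    have h0 := hRs t₀ ht₀
    rcases hσ1 with h | h <;> rw [h] <;> constructor <;> intro hh <;> nlinarith
  have hbandy' : bandK θ y' = if 0 < σ * u y' then k₀ else k₀ + 1 := by
    rw [← hbR, hbandval t₀ hd₀ hut₀, if_congr hsR rfl rfl]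
  have hevL : ∀ᶠ t in 𝓝[<] x, |θ t - θ x| < Real.pi/2 ∧ t ∈ Ico y x := by
    have h1 : Tendsto θ (𝓝[<] x) (𝓝 (θ x)) := (hθ.tendsto x).mono_left nhdsWithin_le_nhds
    exact (h1.eventually (eventually_abs_sub_lt (θ x) (by linarith))).and
      (Filter.eventually_of_mem (Ico_mem_nhdsLT_of_mem ⟨hyx, le_refl x⟩) (fun t ht => ht))
  obtain ⟨t₁, hd₁, ht₁⟩ := hevL.exists
  have hut₁ : u t₁ ≠ 0 := hnz t₁ ⟨ht₁.1, by linarith [ht₁.2]⟩ ht₁.2.ne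
  have hbL : bandK θ y = bandK θ t₁ := by
    refine bandK_const hθ ht₁.1 (fun s hs hc => ?_)
    exact hnz s ⟨hs.1, by linarith [hs.2, ht₁.2]⟩
      (lt_of_le_of_lt hs.2 ht₁.2).ne ((huzero s).mpr hc)
  have hsL : 0 < σ * u t₁ ↔ 0 < σ * u y := by
    have h0 := hLs t₁ ht₁
    rcases hσ1 with h | h <;> rw [h] <;> constructor <;> intro hh <;> nlinarith
  have hbandy : bandK θ y = if 0 < σ * u y then k₀ else k₀ + 1 := by
    rw [hbL, hbandval t₁ hd₁ hut₁, if_congr hsL rfl rfl]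
  -- jump values
  have key : ∀ (F : Filter ℝ), F.NeBot → ∀ (z : ℝ), u z ≠ 0 →
      Tendsto v F (𝓝 (v x)) → Tendsto u F (𝓝 0) → (∀ᶠ t in F, 0 < u t * u z) →
      jumpF (fun t => v t / u t) F = (if 0 < σ * u z then (1:ℝ) else -1)/2 := by
    intro F hF z huz hvF huF hsF
    haveI := hF
    rcases lt_or_gt_of_ne huz with hz | hz
    · have hev : ∀ᶠ t in F, u t < 0 := by filter_upwards [hsF] with t ht; nlinarith
      rcases hσ1 with h1 | h1
      · have hVpos : 0 < v x := by rw [hvx, h1]; simpa using hwpos x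
        rw [jumpF_atBot (tendsto_div_pn hVpos hvF huF hev),
          if_neg (by rw [h1]; nlinarith)]
      · have hVneg : v x < 0 := by rw [hvx, h1]; nlinarith [hwpos x]
        rw [jumpF_atTop (tendsto_div_nn hVneg hvF huF hev),
          if_pos (by rw [h1]; nlinarith)]
    · have hev : ∀ᶠ t in F, 0 < u t := by filter_upwards [hsF] with t ht; nlinarith
      rcases hσ1 with h1 | h1
      · have hVpos : 0 < v x := by rw [hvx, h1]; simpa using hwpos x
        rw [jumpF_atTop (tendsto_div_pp hVpos hvF huF hev),
          if_pos (by rw [h1]; nlinarith)]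
      · have hVneg : v x < 0 := by rw [hvx, h1]; nlinarith [hwpos x]
        rw [jumpF_atBot (tendsto_div_np hVneg hvF huF hev),
          if_neg (by rw [h1]; nlinarith)]
  have hvR : Tendsto v (𝓝[>] x) (𝓝 (v x)) := (hcv.tendsto x).mono_left nhdsWithin_le_nhds
  have huR : Tendsto u (𝓝[>] x) (𝓝 0) := by
    rw [← hx]; exact (hcu.tendsto x).mono_left nhdsWithin_le_nhds
  have hvL : Tendsto v (𝓝[<] x) (𝓝 (v x)) := (hcv.tendsto x).mono_left nhdsWithin_le_nhds
  have huL : Tendsto u (𝓝[<] x) (𝓝 0) := by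
    rw [← hx]; exact (hcu.tendsto x).mono_left nhdsWithin_le_nhds
  have hjR : jumpF (fun t => v t / u t) (𝓝[>] x) = (if 0 < σ * u y' then (1:ℝ) else -1)/2 := by
    refine key _ inferInstance y' huy' hvR huR ?_
    filter_upwards [Ioc_mem_nhdsGT_of_mem (⟨le_refl x, hxy'⟩ : x ∈ Ico x y')] with t ht
    exact hRs t ht
  have hjL : jumpF (fun t => v t / u t) (𝓝[<] x) = (if 0 < σ * u y then (1:ℝ) else -1)/2 := by
    refine key _ inferInstance y huy hvL huL ?_
    filter_upwards [Ico_mem_nhdsLT_of_mem (⟨hyx, le_refl x⟩ : x ∈ Ioc y x)] with t ht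
    have := hLs t ht
    nlinarith
  rw [hjR, hjL, hbandy, hbandy']
  by_cases h1 : 0 < σ * u y <;> by_cases h2 : 0 < σ * u y' <;>
    simp [h1, h2] <;> push_cast <;> norm_num

/-- Telescoping sum of jumps. -/
lemma telescope {θ w u v : ℝ → ℝ} (hθ : Continuous θ) (hw : Continuous w)
    (hwpos : ∀ t, 0 < w t)
    (hu : ∀ t, u t = Real.cos (θ t) * w t) (hv : ∀ t, v t = Real.sin (θ t) * w t)
    {B : ℤ} (hB : ∀ᶠ t in atTop, bandK θ t = B) :
    ∀ (l : List ℝ), l.Pairwise (· < ·) →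
      ∀ y : ℝ, (∀ x ∈ l, y < x) → u y ≠ 0 →
      (∀ t, y ≤ t → u t = 0 → t ∈ l) → (∀ x ∈ l, u x = 0) →
      (l.map (fun x => jumpF (fun t => v t / u t) (𝓝[>] x)
          - jumpF (fun t => v t / u t) (𝓝[<] x))).sum = (bandK θ y : ℝ) - B := by
  have huzero : ∀ s, u s = 0 ↔ Real.cos (θ s) = 0 := by
    intro s
    rw [hu s]
    constructor
    · intro h
      rcases mul_eq_zero.mp h with h | h
      · exact h
      · exact absurd h (hwpos s).ne'
    · intro h; rw [h, zero_mul]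
  intro l
  induction l with
  | nil =>
    intro _ y hy huy hcov _
    obtain ⟨Y, hY⟩ := eventually_atTop.mp hB
    have h1 : bandK θ y = bandK θ (max y Y) := by
      refine bandK_const hθ (le_max_left _ _) (fun s hs hc => ?_)
      exact absurd (hcov s hs.1 ((huzero s).mpr hc)) List.not_mem_nil
    simp only [List.map_nil, List.sum_nil]
    rw [h1, hY (max y Y) (le_max_right _ _)]
    ring
  | cons x l' ih =>
    intro hsort y hy huy hcov hmem
    obtain ⟨hxl', hsort'⟩ := List.pairwise_cons.mp hsort
    have hyx : y < x := hy x List.mem_cons_self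
    obtain ⟨y', hxy', hy'l⟩ : ∃ y', x < y' ∧ ∀ z ∈ l', y' < z := by
      cases l' with
      | nil => exact ⟨x + 1, by linarith, by simp⟩
      | cons z l'' =>
        have hxz : x < z := hxl' z List.mem_cons_self
        refine ⟨(x + z)/2, by linarith, ?_⟩
        intro z' hz'
        rcases List.mem_cons.mp hz' with rfl | hz'
        · linarith
        · have h1 : z < z' := (List.pairwise_cons.mp hsort').1 z' hz'
          linarith
    have hnz : ∀ t ∈ Icc y y', t ≠ x → u t ≠ 0 := by
      intro t ht htx h0
      rcases List.mem_cons.mp (hcov t ht.1 h0) with rfl | h1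
      · exact htx rfl
      · exact absurd ht.2 (not_le.mpr (hy'l t h1))
    have hux : u x = 0 := hmem x List.mem_cons_self
    have huy' : u y' ≠ 0 := by
      intro h0
      rcases List.mem_cons.mp (hcov y' (by linarith) h0) with rfl | h1
      · exact absurd hxy' (lt_irrefl _)
      · exact absurd (hy'l y' h1) (lt_irrefl _)
    have hcov' : ∀ t, y' ≤ t → u t = 0 → t ∈ l' := by
      intro t ht h0
      rcases List.mem_cons.mp (hcov t (by linarith) h0) with rfl | h1
      · exact absurd ht (not_le.mpr hxy')
      · exact h1
    have hmem' : ∀ z ∈ l', u z = 0 := fun z hz => hmem z (List.mem_cons_of_mem x hz)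
    rw [List.map_cons, List.sum_cons,
      jump_eq_bandK hθ hw hwpos hu hv hyx hxy' hnz hux,
      ih hsort' y' hy'l huy' hcov' hmem']
    ring

lemma arg_cont_of_im_ne (r : ℂ) (h : r.im ≠ 0) :
    Continuous fun t : ℝ => ((t : ℂ) - r).arg := by
  rw [continuous_iff_continuousAt]
  intro t
  refine (Complex.continuousAt_arg ?_).comp
    ((Complex.continuous_ofReal.sub continuous_const).continuousAt)
  rw [Complex.mem_slitPlane_iff]
  right
  simp [h]

lemma ratio_tendsto_zero (r : ℂ) : Tendsto (fun t : ℝ => r / (t : ℂ)) atTop (𝓝 0) := by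
  apply squeeze_zero_norm' (a := fun t : ℝ => ‖r‖ / t)
  · filter_upwards [eventually_gt_atTop (0:ℝ)] with t ht
    rw [norm_div, Complex.norm_real]
    rw [Real.norm_eq_abs, abs_of_pos ht]
  · exact tendsto_const_nhds.div_atTop tendsto_id

lemma ratio_tendsto_zero' (r : ℂ) : Tendsto (fun t : ℝ => r / (t : ℂ)) atBot (𝓝 0) := by
  apply squeeze_zero_norm' (a := fun t : ℝ => ‖r‖ / (-t))
  · filter_upwards [eventually_lt_atBot (0:ℝ)] with t ht
    rw [norm_div, Complex.norm_real]
    rw [Real.norm_eq_abs, abs_of_neg ht]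
  · have h1 : Tendsto (fun t : ℝ => -t) atBot atTop := tendsto_neg_atBot_atTop
    exact tendsto_const_nhds.div_atTop h1

lemma arg_tendsto_top (r : ℂ) : Tendsto (fun t : ℝ => ((t : ℂ) - r).arg) atTop (𝓝 0) := by
  have h1 : Tendsto (fun t : ℝ => 1 - r / (t : ℂ)) atTop (𝓝 1) := by
    simpa using (tendsto_const_nhds (x := (1:ℂ))).sub (ratio_tendsto_zero r)
  have h2 : Tendsto (fun t : ℝ => (1 - r / (t : ℂ)).arg) atTop (𝓝 0) := by
    have := (Complex.continuousAt_arg (by simp [Complex.mem_slitPlane_iff] :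
      (1:ℂ) ∈ Complex.slitPlane)).tendsto
    rw [Complex.arg_one] at this
    exact this.comp h1
  refine h2.congr' ?_
  filter_upwards [eventually_gt_atTop (0:ℝ)] with t ht
  rw [← Complex.arg_real_mul (1 - r / (t:ℂ)) ht]
  congr 1
  have htne : (t : ℂ) ≠ 0 := by exact_mod_cast ht.ne'
  field_simp

lemma arg_tendsto_bot_pos {r : ℂ} (h : 0 < r.im) :
    Tendsto (fun t : ℝ => ((t : ℂ) - r).arg) atBot (𝓝 (-Real.pi)) := by
  have h1 : Tendsto (fun t : ℝ => r / (t : ℂ) - 1) atBot (𝓝[{z : ℂ | z.im < 0}] (-1)) := by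
    rw [tendsto_nhdsWithin_iff]
    constructor
    · simpa using (ratio_tendsto_zero' r).sub (tendsto_const_nhds (x := (1:ℂ)))
    · filter_upwards [eventually_lt_atBot (0:ℝ)] with t ht
      simp only [Set.mem_setOf_eq, Complex.sub_im, Complex.one_im, sub_zero,
        Complex.div_ofReal_im]
      exact div_neg_of_pos_of_neg h ht
  have h2 := (Complex.tendsto_arg_nhdsWithin_im_neg_of_re_neg_of_im_zero
    (by norm_num : (-1 : ℂ).re < 0) (by norm_num : (-1 : ℂ).im = 0)).comp h1
  refine h2.congr' ?_
  filter_upwards [eventually_lt_atBot (0:ℝ)] with t ht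
  have hpos : (0:ℝ) < -t := by linarith
  rw [Function.comp_apply, ← Complex.arg_real_mul (r / (t:ℂ) - 1) hpos]
  congr 1
  have htne : (t : ℂ) ≠ 0 := by
    simpa using (show t ≠ 0 from ht.ne)
  push_cast
  field_simp
  ring

lemma arg_tendsto_bot_neg {r : ℂ} (h : r.im < 0) :
    Tendsto (fun t : ℝ => ((t : ℂ) - r).arg) atBot (𝓝 Real.pi) := by
  have h1 : Tendsto (fun t : ℝ => r / (t : ℂ) - 1) atBot (𝓝[{z : ℂ | 0 ≤ z.im}] (-1)) := by
    rw [tendsto_nhdsWithin_iff]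
    constructor
    · simpa using (ratio_tendsto_zero' r).sub (tendsto_const_nhds (x := (1:ℂ)))
    · filter_upwards [eventually_lt_atBot (0:ℝ)] with t ht
      simp only [Set.mem_setOf_eq, Complex.sub_im, Complex.one_im, sub_zero,
        Complex.div_ofReal_im]
      exact (div_pos_of_neg_of_neg h ht).le
  have h2 := (Complex.tendsto_arg_nhdsWithin_im_nonneg_of_re_neg_of_im_zero
    (by norm_num : (-1 : ℂ).re < 0) (by norm_num : (-1 : ℂ).im = 0)).comp h1
  refine h2.congr' ?_
  filter_upwards [eventually_lt_atBot (0:ℝ)] with t ht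
  have hpos : (0:ℝ) < -t := by linarith
  rw [Function.comp_apply, ← Complex.arg_real_mul (r / (t:ℂ) - 1) hpos]
  congr 1
  have htne : (t : ℂ) ≠ 0 := by
    simpa using (show t ≠ 0 from ht.ne)
  push_cast
  field_simp
  ring

noncomputable def thetaM (R : Multiset ℂ) (t : ℝ) : ℝ :=
  (R.map (fun r => ((t:ℂ) - r).arg)).sum

noncomputable def PM (R : Multiset ℂ) (t : ℝ) : ℂ :=
  (R.map (fun r => (t:ℂ) - r)).prod

lemma PM_ne_zero {R : Multiset ℂ} (hR : ∀ r ∈ R, r.im ≠ 0) (t : ℝ) : PM R t ≠ 0 := by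
  refine Multiset.prod_ne_zero ?_
  simp only [Multiset.mem_map]
  rintro ⟨r, hr, h0⟩
  have : ((t:ℂ) - r).im = -r.im := by simp
  rw [h0] at this
  simp only [Complex.zero_im] at this
  exact hR r hr (by linarith [this.symm] )

lemma thetaM_continuous {R : Multiset ℂ} (hR : ∀ r ∈ R, r.im ≠ 0) :
    Continuous (thetaM R) := by
  induction R using Multiset.induction_on with
  | empty =>
    have h0 : thetaM 0 = fun _ => 0 := by funext t; simp [thetaM]
    rw [h0]; exact continuous_const
  | cons a s ih =>
    have h1 : thetaM (a ::ₘ s) = fun t : ℝ => ((t:ℂ) - a).arg + thetaM s t := by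
      funext t; simp [thetaM]
    rw [h1]
    exact (arg_cont_of_im_ne a (hR a (Multiset.mem_cons_self a s))).add
      (ih (fun r hr => hR r (Multiset.mem_cons_of_mem hr)))

lemma thetaM_exp {R : Multiset ℂ} (hR : ∀ r ∈ R, r.im ≠ 0) (t : ℝ) :
    (‖PM R t‖ : ℂ) * Complex.exp (thetaM R t * Complex.I) = PM R t := by
  induction R using Multiset.induction_on with
  | empty => simp [thetaM, PM]
  | cons a s ih =>
    have ha : ((t:ℂ) - a) ≠ 0 := by
      intro h0
      have : ((t:ℂ) - a).im = -a.im := by simp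
      rw [h0] at this
      simp only [Complex.zero_im] at this
      exact hR a (Multiset.mem_cons_self a s) (by linarith [this.symm])
    have h1 : thetaM (a ::ₘ s) t = ((t:ℂ) - a).arg + thetaM s t := by simp [thetaM]
    have h2 : PM (a ::ₘ s) t = ((t:ℂ) - a) * PM s t := by simp [PM]
    have h3 := ih (fun r hr => hR r (Multiset.mem_cons_of_mem hr))
    have h4 : ((‖(t:ℂ) - a‖ : ℂ)) * Complex.exp (((t:ℂ) - a).arg * Complex.I)
        = (t:ℂ) - a := by
      simpa using Complex.abs_mul_exp_arg_mul_I ((t:ℂ) - a)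
    rw [h1, h2, norm_mul, Complex.ofReal_add, add_mul, Complex.exp_add, Complex.ofReal_mul,
      mul_mul_mul_comm, h4, h3]

lemma thetaM_top {R : Multiset ℂ} : Tendsto (thetaM R) atTop (𝓝 0) := by
  induction R using Multiset.induction_on with
  | empty =>
    have h0 : thetaM 0 = fun _ => 0 := by funext t; simp [thetaM]
    simpa [h0] using tendsto_const_nhds
  | cons a s ih =>
    have h1 : thetaM (a ::ₘ s) = fun t : ℝ => ((t:ℂ) - a).arg + thetaM s t := by
      funext t; simp [thetaM]
    rw [h1]
    simpa using (arg_tendsto_top a).add ih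

lemma thetaM_bot {R : Multiset ℂ} (hR : ∀ r ∈ R, r.im ≠ 0) :
    Tendsto (thetaM R) atBot
      (𝓝 ((R.map (fun r => if 0 < r.im then (-Real.pi) else Real.pi)).sum)) := by
  induction R using Multiset.induction_on with
  | empty =>
    have h0 : thetaM 0 = fun _ => 0 := by funext t; simp [thetaM]
    simpa [h0] using tendsto_const_nhds
  | cons a s ih =>
    have h1 : thetaM (a ::ₘ s) = fun t : ℝ => ((t:ℂ) - a).arg + thetaM s t := by
      funext t; simp [thetaM]
    have h2 : ((a ::ₘ s).map (fun r => if 0 < r.im then (-Real.pi) else Real.pi)).sum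
        = (if 0 < a.im then (-Real.pi) else Real.pi)
          + (s.map (fun r => if 0 < r.im then (-Real.pi) else Real.pi)).sum := by
      simp
    rw [h1, h2]
    have ih' := ih (fun r hr => hR r (Multiset.mem_cons_of_mem hr))
    by_cases ha : 0 < a.im
    · rw [if_pos ha]
      exact (arg_tendsto_bot_pos ha).add ih'
    · rw [if_neg ha]
      have ha' : a.im < 0 :=
        lt_of_le_of_ne (not_lt.mp ha) (hR a (Multiset.mem_cons_self a s))
      exact (arg_tendsto_bot_neg ha').add ih'

lemma sum_if_pi (R : Multiset ℂ) :
    (R.map (fun r => if 0 < r.im then (-Real.pi) else Real.pi)).sum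
      = Real.pi * ((Multiset.card R : ℝ)
        - 2 * ((R.filter (fun r => 0 < r.im)).card : ℝ)) := by
  induction R using Multiset.induction_on with
  | empty => simp
  | cons a s ih =>
    by_cases ha : 0 < a.im
    · rw [Multiset.filter_cons_of_pos (p := fun r : ℂ => 0 < r.im) s ha]
      simp only [Multiset.map_cons, Multiset.sum_cons, Multiset.card_cons, if_pos ha, ih]
      push_cast
      ring
    · rw [Multiset.filter_cons_of_neg (p := fun r : ℂ => 0 < r.im) s ha]
      simp only [Multiset.map_cons, Multiset.sum_cons, Multiset.card_cons, if_neg ha, ih]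
      push_cast
      ring

lemma finsum_count (R : Multiset ℂ) :
    (∑ᶠ z ∈ {z : ℂ | 0 < z.im}, ((R.count z : ℝ)))
      = ((Multiset.card (R.filter (fun r => 0 < r.im)) : ℝ)) := by
  classical
  have hsupfin : ({z : ℂ | 0 < z.im} ∩ Function.support fun z => ((R.count z : ℝ))).Finite := by
    apply Set.Finite.inter_of_right
    apply Set.Finite.subset R.toFinset.finite_toSet
    intro z hz
    simp only [Function.mem_support] at hz
    have h1 : R.count z ≠ 0 := fun h => hz (by rw [h]; norm_num)
    simpa [Multiset.mem_toFinset] using Multiset.count_ne_zero.mp h1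
  rw [finsum_mem_eq_sum _ hsupfin]
  have hset : hsupfin.toFinset = (R.filter (fun r => 0 < r.im)).toFinset := by
    ext z
    simp only [Set.Finite.mem_toFinset, Set.mem_inter_iff, Set.mem_setOf_eq,
      Function.mem_support, Multiset.mem_toFinset, Multiset.mem_filter]
    constructor
    · rintro ⟨h1, h2⟩
      refine ⟨Multiset.count_ne_zero.mp (fun h => h2 (by rw [h]; norm_num)), h1⟩
    · rintro ⟨h1, h2⟩
      refine ⟨h2, ?_⟩
      have := Multiset.count_ne_zero.mpr h1
      exact_mod_cast Nat.cast_ne_zero.mpr this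
  rw [hset]
  have hcongr : ∀ z ∈ (R.filter (fun r => 0 < r.im)).toFinset,
      ((R.count z : ℝ)) = (((R.filter (fun r => 0 < r.im)).count z : ℝ)) := by
    intro z hz
    rw [Multiset.count_filter]
    have := (Multiset.mem_filter.mp (Multiset.mem_toFinset.mp hz)).2
    rw [if_pos this]
  rw [Finset.sum_congr rfl hcongr]
  rw_mod_cast [Multiset.toFinset_sum_count_eq]

lemma refin (p : Polynomial ℂ) (hp : p.Monic) :
    {t : ℝ | (p.eval (t:ℂ)).re = 0}.Finite := by
  classical
  set n := p.natDegree with hn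
  set pR : Polynomial ℝ :=
    ∑ i ∈ Finset.range (n+1), Polynomial.C ((p.coeff i).re) * Polynomial.X ^ i with hpR
  have heval : ∀ t : ℝ, pR.eval t = (p.eval (t:ℂ)).re := by
    intro t
    rw [hpR, Polynomial.eval_finset_sum, Polynomial.eval_eq_sum_range, Complex.re_sum]
    apply Finset.sum_congr rfl
    intro i _
    simp [← Complex.ofReal_pow, Complex.mul_re]
  have hco : pR.coeff n = 1 := by
    rw [hpR, Polynomial.finset_sum_coeff]
    simp only [Polynomial.coeff_C_mul, Polynomial.coeff_X_pow, mul_ite, mul_one, mul_zero]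
    rw [Finset.sum_ite_eq (Finset.range (n+1)) n (fun i => (p.coeff i).re),
      if_pos (Finset.self_mem_range_succ n)]
    rw [show (p.coeff n).re = (p.coeff p.natDegree).re from rfl, hp.coeff_natDegree]
    norm_num
  have hne : pR ≠ 0 := fun h => by rw [h] at hco; simp at hco
  apply (Polynomial.finite_setOf_isRoot hne).subset
  intro t ht
  simpa [Polynomial.IsRoot, heval t] using ht

set_option maxHeartbeats 1000000 in
theorem proots_upper_cindex_eq (p : Polynomial ℂ)
    (hmonic : p.Monic) (hreal : ∀ x : ℝ, p.eval (x : ℂ) ≠ 0) :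
    (∑ᶠ z ∈ {z : ℂ | 0 < z.im}, (p.rootMultiplicity z : ℝ))
      = ((p.natDegree : ℝ)
          - ∑ᶠ x : ℝ,
              (jumpF (fun t => (p.eval (t : ℂ)).im / (p.eval (t : ℂ)).re) (𝓝[>] x)
               - jumpF (fun t => (p.eval (t : ℂ)).im / (p.eval (t : ℂ)).re) (𝓝[<] x))) / 2 := by
  classical
  have hπ := Real.pi_pos
  have hp0 : p ≠ 0 := hmonic.ne_zero
  have hsplit : Splits p := IsAlgClosed.splits p
  have hfact : p = (p.roots.map fun a => X - C a).prod :=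
    hsplit.eq_prod_roots_of_monic hmonic
  have hcard : Multiset.card p.roots = p.natDegree := splits_iff_card_roots.mp hsplit
  have him : ∀ r ∈ p.roots, r.im ≠ 0 := by
    intro r hr h0
    have hroot : p.IsRoot r := (Polynomial.mem_roots hp0).mp hr
    have hre : r = ((r.re : ℝ) : ℂ) := Complex.ext rfl (by simp [h0])
    exact hreal r.re (by rw [← hre]; exact hroot)
  have hPM : ∀ t : ℝ, p.eval (t:ℂ) = PM p.roots t := by
    intro t
    conv_lhs => rw [hfact]
    rw [Polynomial.eval_multiset_prod, PM, Multiset.map_map]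
    congr 1
    apply Multiset.map_congr rfl
    intro r hr
    simp
  have hwpos : ∀ t : ℝ, 0 < ‖PM p.roots t‖ := fun t => norm_pos_iff.mpr (PM_ne_zero him t)
  have hθ : Continuous (thetaM p.roots) := thetaM_continuous him
  have hpc : Continuous fun t : ℝ => p.eval (t:ℂ) :=
    p.continuous.comp Complex.continuous_ofReal
  have hw : Continuous (fun t : ℝ => ‖PM p.roots t‖) := by
    have h2 : (fun t : ℝ => ‖PM p.roots t‖) = fun t : ℝ => ‖p.eval (t:ℂ)‖ := by
      funext t; rw [hPM t]
    rw [h2]; exact hpc.norm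
  have hu : ∀ t : ℝ, (p.eval (t:ℂ)).re = Real.cos (thetaM p.roots t) * ‖PM p.roots t‖ := by
    intro t
    rw [hPM t, ← thetaM_exp him t]
    simp [Complex.mul_re, Complex.exp_ofReal_mul_I_re]
    ring
  have hv : ∀ t : ℝ, (p.eval (t:ℂ)).im = Real.sin (thetaM p.roots t) * ‖PM p.roots t‖ := by
    intro t
    rw [hPM t, ← thetaM_exp him t]
    simp [Complex.mul_im, Complex.exp_ofReal_mul_I_im]
    ring
  have hufin : {t : ℝ | (p.eval (t:ℂ)).re = 0}.Finite := refin p hmonic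
  set Zfin := hufin.toFinset with hZ
  set N := Multiset.card (p.roots.filter (fun r => 0 < r.im)) with hN
  set n := p.natDegree with hn
  -- band at +infinity
  have hfloor0 : ⌊(0:ℝ)/Real.pi + 1/2⌋ = 0 := by
    rw [Int.floor_eq_iff] <;> norm_num
  have hB : ∀ᶠ t in atTop, bandK (thetaM p.roots) t = 0 := by
    have h := bandK_eventually (thetaM_top (R := p.roots)) (by norm_num : Real.cos 0 ≠ 0)
    filter_upwards [h] with t ht
    rw [ht, hfloor0]
  -- band at -infinity
  have hbotlim : Tendsto (thetaM p.roots) atBot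
      (𝓝 (Real.pi * ((n:ℝ) - 2*(N:ℝ)))) := by
    have h := thetaM_bot him
    rw [sum_if_pi, hcard] at h
    exact h
  have hcosA : Real.cos (Real.pi * ((n:ℝ) - 2*(N:ℝ))) ≠ 0 := by
    have he : Real.pi * ((n:ℝ) - 2*(N:ℝ)) = (((n:ℤ) - 2*(N:ℤ) : ℤ) : ℝ) * Real.pi := by
      push_cast; ring
    rw [he]
    intro h0
    have habs := Real.abs_cos_int_mul_pi ((n:ℤ) - 2*(N:ℤ))
    rw [h0] at habs
    norm_num at habs
  have hfloorA : ⌊(Real.pi * ((n:ℝ) - 2*(N:ℝ))) / Real.pi + 1/2⌋ = (n:ℤ) - 2*(N:ℤ) := by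
    have h1 : (Real.pi * ((n:ℝ) - 2*(N:ℝ))) / Real.pi = (n:ℝ) - 2*(N:ℝ) := by
      field_simp
    rw [h1, Int.floor_eq_iff]
    constructor <;> push_cast <;> linarith
  have hA : ∀ᶠ t in atBot, bandK (thetaM p.roots) t = (n:ℤ) - 2*(N:ℤ) := by
    have h := bandK_eventually hbotlim hcosA
    filter_upwards [h] with t ht
    rw [ht, hfloorA]
  -- choose starting point y
  have hevy : ∀ᶠ t in atBot, (bandK (thetaM p.roots) t = (n:ℤ) - 2*(N:ℤ))
      ∧ ((p.eval (t:ℂ)).re ≠ 0) ∧ ∀ x ∈ Zfin, t < x := by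
    refine hA.and (Filter.Eventually.and ?_ ?_)
    · have h1 : Tendsto (fun t => Real.cos (thetaM p.roots t)) atBot
          (𝓝 (Real.cos (Real.pi * ((n:ℝ) - 2*(N:ℝ))))) :=
        (Real.continuous_cos.tendsto _).comp hbotlim
      have h2 := h1.eventually_ne hcosA
      filter_upwards [h2] with t ht h0
      apply ht
      have h3 := hu t
      rw [h0] at h3
      rcases mul_eq_zero.mp h3.symm with h | h
      · exact h
      · exact absurd h (hwpos t).ne'
    · refine Zfin.eventually_all.mpr (fun x _ => eventually_lt_atBot x)
  obtain ⟨y, hyA, hyu, hyZ⟩ := hevy.exists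
  set l := Zfin.sort (· ≤ ·) with hl
  have hsort : l.Pairwise (· < ·) := List.sortedLT_iff_pairwise.mp Zfin.sortedLT_sort
  have hmeml : ∀ x : ℝ, x ∈ l ↔ x ∈ Zfin := fun x => Finset.mem_sort _
  have htel := telescope (u := fun t : ℝ => (p.eval (t:ℂ)).re)
    (v := fun t : ℝ => (p.eval (t:ℂ)).im)
    hθ hw hwpos hu hv hB l hsort y
    (fun x hx => hyZ x ((hmeml x).mp hx)) hyu
    (fun t _ h0 => (hmeml t).mpr (hufin.mem_toFinset.mpr h0))
    (fun x hx => hufin.mem_toFinset.mp ((hmeml x).mp hx))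
  set F := fun x : ℝ => jumpF (fun t => (p.eval (t:ℂ)).im / (p.eval (t:ℂ)).re) (𝓝[>] x)
      - jumpF (fun t => (p.eval (t:ℂ)).im / (p.eval (t:ℂ)).re) (𝓝[<] x) with hF
  have hFsupp : Function.support F ⊆ ↑Zfin := by
    intro x hx
    rw [Function.mem_support] at hx
    by_contra hxZ
    apply hx
    have hux : (p.eval (x:ℂ)).re ≠ 0 := by
      intro h0
      exact hxZ (Finset.mem_coe.mpr (hufin.mem_toFinset.mpr h0))
    have hcont : ContinuousAt (fun t : ℝ => (p.eval (t:ℂ)).im / (p.eval (t:ℂ)).re) x :=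
      ((Complex.continuous_im.comp hpc).continuousAt).div
        ((Complex.continuous_re.comp hpc).continuousAt) hux
    have hR' := (hcont.tendsto).mono_left (nhdsWithin_le_nhds (s := Ioi x))
    have hL' := (hcont.tendsto).mono_left (nhdsWithin_le_nhds (s := Iio x))
    simp only [hF]
    rw [jumpF_nhds hR', jumpF_nhds hL', sub_zero]
  have hsum : (∑ᶠ x : ℝ, F x) = ∑ x ∈ Zfin, F x := finsum_eq_sum_of_support_subset F hFsupp
  have hlistsum : ∑ x ∈ Zfin, F x = (l.map F).sum := by
    rw [← Finset.sum_map_toList]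
    exact (List.Perm.sum_eq (List.Perm.map F (Zfin.sort_perm_toList (· ≤ ·)))).symm
  have htel2 : (l.map F).sum = ((bandK (thetaM p.roots) y : ℝ)) - ((0:ℤ) : ℝ) := htel
  have hind : (∑ᶠ x : ℝ, F x) = ((n:ℝ) - 2*(N:ℝ)) := by
    rw [hsum, hlistsum, htel2, hyA]
    push_cast
    ring
  have hLHS : (∑ᶠ z ∈ {z : ℂ | 0 < z.im}, (p.rootMultiplicity z : ℝ)) = (N:ℝ) := by
    have h1 : (∑ᶠ z ∈ {z : ℂ | 0 < z.im}, (p.rootMultiplicity z : ℝ))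
        = (∑ᶠ z ∈ {z : ℂ | 0 < z.im}, ((p.roots.count z : ℝ))) := by
      apply finsum_mem_congr rfl
      intro z _
      rw [Polynomial.count_roots]
    rw [h1, finsum_count]
  rw [hLHS, hind]
  push_cast
  ring
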